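/- Degenerate attacker winning condition: if G is strongly connected, has a node with a self-loop, and X < d⁺_max · Y, then the attacker can, in finitely many moves from any initial state, reach a state y* (all mass at a node of maximum out-degree) with X^req(y*) = d⁺_max · Y > X, so that no defender state x with ∑_i x_i = X can satisfy x_i ≥ max_{F}[Fy*]_i for all i. -/

import Mathlib

open Finset

/-- Left-stochastic matrix supported on adjacency pattern `A`. -/
def IsStoch {I : Type*} [Fintype I] (A K : Matrix I I ℝ) : Prop :=
  (∀ i j, 0 ≤ K i j) ∧ (∀ j, ∑ i, K i j = 1) ∧ ∀ i j, A i j = 0 → K i j = 0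

/-- `{0,1}`-valued left-stochastic matrix supported on `A` (extreme action). -/
def IsExtreme01 {I : Type*} [Fintype I] (A K : Matrix I I ℝ) : Prop :=
  IsStoch A K ∧ ∀ i j, K i j = 0 ∨ K i j = 1

/-- Deterministic routing matrix of `f`. -/
def detMat {N : ℕ} (f : Fin N → Fin N) : Matrix (Fin N) (Fin N) ℝ :=
  fun i j => if f j = i then 1 else 0

/-- Trajectory of a sequence of matrices. -/
def traj {N : ℕ} (Ms : ℕ → Matrix (Fin N) (Fin N) ℝ) (y0 : Fin N → ℝ) : ℕ → Fin N → ℝ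
  | 0 => y0
  | t + 1 => (Ms t).mulVec (traj Ms y0 t)

lemma detMat_isStoch {N : ℕ} (A : Matrix (Fin N) (Fin N) ℝ) (f : Fin N → Fin N)
    (hf : ∀ j, A (f j) j = 1) : IsStoch A (detMat f) := by
  refine ⟨fun i j => by unfold detMat; positivity, fun j => ?_, fun i j hA => ?_⟩
  · simp [detMat]
  · simp only [detMat, ite_eq_right_iff, one_ne_zero]
    rintro rfl
    rw [hf j] at hA; exact one_ne_zero hA

lemma detMat_mulVec {N : ℕ} (f : Fin N → Fin N) (v : Fin N → ℝ) :
    (detMat f).mulVec v = fun i => ∑ j ∈ univ.filter (fun j => f j = i), v j := by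
  funext i
  rw [Matrix.mulVec, Finset.sum_filter]
  simp [detMat, dotProduct, ite_mul]

lemma detMat_mulVec_single {N : ℕ} (f : Fin N → Fin N) (q : Fin N) (Y : ℝ) :
    (detMat f).mulVec (Pi.single q Y) = Pi.single (f q) Y := by
  funext i
  rw [Matrix.mulVec, dotProduct]
  rw [Finset.sum_eq_single q]
  · simp [detMat, Pi.single_apply, eq_comm]
  · intro b _ hb; simp [Pi.single_apply, hb]
  · simp

lemma exists_chainFun {α : Type*} {r : α → α → Prop} {a b : α}
    (h : Relation.ReflTransGen r a b) :
    ∃ n, ∃ g : ℕ → α, g 0 = a ∧ g n = b ∧ ∀ k < n, r (g k) (g (k + 1)) := by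
  induction h with
  | refl => exact ⟨0, fun _ => a, rfl, rfl, by omega⟩
  | @tail b c hab hbc ih =>
    obtain ⟨n, g, h0, hn, hstep⟩ := ih
    refine ⟨n + 1, fun k => if k ≤ n then g k else c, by simp [h0], by simp, ?_⟩
    intro k hk
    rcases Nat.lt_or_ge k n with h | h
    · have h1 : k ≤ n := le_of_lt h
      have h2 : k + 1 ≤ n := h
      simpa [h1, h2] using hstep k h
    · have : k = n := by omega
      subst this
      simpa [hn] using hbc

theorem stmt16 {N : ℕ} (hN : 0 < N) (A : Matrix (Fin N) (Fin N) ℝ)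
    (hA01 : ∀ i j, A i j = 0 ∨ A i j = 1)
    (hcol : ∀ j, 1 ≤ ∑ i, A i j)
    (hsc : ∀ i j : Fin N, Relation.ReflTransGen (fun a b => A b a = 1) i j)
    (hloop : ∃ i, A i i = 1)
    (X Y : ℝ) (hY : 0 < Y)
    (hXY : X < (Finset.univ.sup' (Finset.univ_nonempty_iff.mpr (Fin.pos_iff_nonempty.mp hN))
        (fun j => ∑ i, A i j)) * Y)
    (y0 : Fin N → ℝ) (hy0 : ∀ i, 0 ≤ y0 i) (hsum : ∑ i, y0 i = Y) :
    ∃ jmax : Fin N,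
      (∑ i, A i jmax) =
        (Finset.univ.sup' (Finset.univ_nonempty_iff.mpr (Fin.pos_iff_nonempty.mp hN))
          (fun j => ∑ i, A i j)) ∧
      (∃ τ : ℕ, ∃ y : ℕ → Fin N → ℝ, y 0 = y0 ∧
        (∀ t < τ, ∃ F, IsStoch A F ∧ y (t + 1) = F.mulVec (y t)) ∧
        y τ = Pi.single jmax Y) ∧
      (∑ j, (∑ i, A i j) * (Pi.single jmax Y : Fin N → ℝ) j =
        (Finset.univ.sup' (Finset.univ_nonempty_iff.mpr (Fin.pos_iff_nonempty.mp hN))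
          (fun j => ∑ i, A i j)) * Y) ∧
      X < (Finset.univ.sup' (Finset.univ_nonempty_iff.mpr (Fin.pos_iff_nonempty.mp hN))
          (fun j => ∑ i, A i j)) * Y ∧
      ∀ x : Fin N → ℝ, (∀ i, 0 ≤ x i) → ∑ i, x i = X →
        ∃ i, ∃ F, IsStoch A F ∧ x i < F.mulVec (Pi.single jmax Y) i := by
  classical
  obtain ⟨jmax, -, hjmax⟩ := Finset.exists_mem_eq_sup'
    (Finset.univ_nonempty_iff.mpr (Fin.pos_iff_nonempty.mp hN)) (fun j => ∑ i, A i j)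
  -- `hjmax : sup' ... = ∑ i, A i jmax`
  obtain ⟨L, hL⟩ := hloop
  -- out-neighbor for every node
  have hout : ∀ j, ∃ i, A i j = 1 := by
    intro j
    by_contra h
    push_neg at h
    have h0 : ∀ i, A i j = 0 := fun i => (hA01 i j).resolve_right (h i)
    have := hcol j
    simp [h0] at this
    linarith
  set n0 : Fin N → Fin N := fun j => Classical.choose (hout j) with hn0
  have hn0A : ∀ j, A (n0 j) j = 1 := fun j => Classical.choose_spec (hout j)
  -- chains to L and the distance function
  have hex : ∀ i : Fin N, ∃ n, ∃ g : ℕ → Fin N,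
      g 0 = i ∧ g n = L ∧ ∀ k < n, A (g (k + 1)) (g k) = 1 :=
    fun i => exists_chainFun (hsc i L)
  set d : Fin N → ℕ := fun i => Nat.find (hex i) with hd
  have hdspec : ∀ i, ∃ g : ℕ → Fin N,
      g 0 = i ∧ g (d i) = L ∧ ∀ k < d i, A (g (k + 1)) (g k) = 1 :=
    fun i => Nat.find_spec (hex i)
  have hdzero : ∀ i, d i = 0 → i = L := by
    intro i h0
    obtain ⟨g, hg0, hgn, -⟩ := hdspec i
    rw [h0] at hgn
    rw [← hg0, hgn]
  -- descent function
  set f : Fin N → Fin N := fun i =>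
    if i = L then L else Classical.choose (hdspec i) 1 with hf
  have hfL : f L = L := by simp [hf]
  have hfA : ∀ i, A (f i) i = 1 := by
    intro i
    by_cases hiL : i = L
    · subst hiL; rw [hfL]; exact hL
    · obtain ⟨hg0, hgn, hgs⟩ := Classical.choose_spec (hdspec i)
      have hdi : 0 < d i := Nat.pos_of_ne_zero (fun h => hiL (hdzero i h))
      have := hgs 0 hdi
      simp only [hf, hiL, if_false]
      rwa [hg0] at this
  have hfd : ∀ i, i ≠ L → d (f i) < d i := by
    intro i hiL
    obtain ⟨hg0, hgn, hgs⟩ := Classical.choose_spec (hdspec i)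
    set g := Classical.choose (hdspec i)
    have hdi : 0 < d i := Nat.pos_of_ne_zero (fun h => hiL (hdzero i h))
    have hle : d (g 1) ≤ d i - 1 := by
      apply Nat.find_le
      refine ⟨fun k => g (k + 1), rfl, ?_, ?_⟩
      · show g (d i - 1 + 1) = L
        have : d i - 1 + 1 = d i := by omega
        rw [this]; exact hgn
      · intro k hk
        exact hgs (k + 1) (by omega)
    have : f i = g 1 := by rw [hf]; exact if_neg hiL
    rw [this]
    omega
  have hiter : ∀ t : ℕ, ∀ i, d i ≤ t → f^[t] i = L := by
    intro t
    induction t with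
    | zero => intro i h; simpa using hdzero i (Nat.le_zero.mp h)
    | succ t ih =>
      intro i h
      by_cases hiL : i = L
      · subst hiL; exact Function.iterate_fixed hfL _
      · rw [Function.iterate_succ_apply]
        exact ih (f i) (by have := hfd i hiL; omega)
  set T : ℕ := Finset.univ.sup d with hT
  have hfT : ∀ i, f^[T] i = L :=
    fun i => hiter T i (Finset.le_sup (Finset.mem_univ i))
  -- path from L to jmax
  obtain ⟨m, p, hp0, hpm, hps⟩ := exists_chainFun (hsc L jmax)
  -- phase-2 routing functions
  set F2 : ℕ → Fin N → Fin N := fun s j => if j = p s then p (s + 1) else n0 j with hF2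
  have hF2A : ∀ s < m, ∀ j, A (F2 s j) j = 1 := by
    intro s hs j
    by_cases hj : j = p s
    · simp only [hF2, hj, if_pos rfl]
      exact hps s hs
    · simp only [hF2, hj, if_neg hj]
      exact hn0A j
  -- full matrix sequence and trajectory
  set Ms : ℕ → Matrix (Fin N) (Fin N) ℝ :=
    fun t => if t < T then detMat f else detMat (F2 (t - T)) with hMs
  set y : ℕ → Fin N → ℝ := traj Ms y0 with hy
  have hy0' : y 0 = y0 := rfl
  -- phase 1 formula
  have hP1 : ∀ t ≤ T, y t = fun i => ∑ j ∈ univ.filter (fun j => f^[t] j = i), y0 j := by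
    intro t ht
    induction t with
    | zero =>
      funext i
      rw [hy0', Finset.sum_filter, Finset.sum_eq_single i]
      · simp
      · intro b _ hb; simp [hb]
      · simp
    | succ t ih =>
      have htT : t < T := ht
      have hMst : Ms t = detMat f := by simp [hMs, htT]
      have hstep : y (t + 1) = (detMat f).mulVec (y t) := by
        rw [hy]; show traj Ms y0 (t+1) = _; rw [traj, hMst, ← hy]
      rw [hstep, ih (le_of_lt htT), detMat_mulVec]
      funext i
      have := Finset.sum_fiberwise_eq_sum_filter univ (univ.filter (fun j => f j = i))
        (fun k => f^[t] k) y0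
      rw [this]
      apply Finset.sum_congr
      · ext k
        simp [Function.iterate_succ_apply']
      · intros; rfl
  have hyT : y T = Pi.single L Y := by
    rw [hP1 T le_rfl]
    funext i
    rw [Pi.single_apply]
    by_cases hiL : i = L
    · have h1 : univ.filter (fun j => f^[T] j = i) = univ := by
        ext j; simp [hfT j, hiL]
      rw [h1, hsum, if_pos hiL]
    · have h1 : univ.filter (fun j => f^[T] j = i) = ∅ := by
        ext j
        simp only [Finset.mem_filter, Finset.mem_univ, true_and,
          Finset.notMem_empty, iff_false, hfT j]
        exact fun h => hiL h.symm
      rw [h1, if_neg hiL]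
      simp
  -- phase 2
  have hP2 : ∀ s ≤ m, y (T + s) = Pi.single (p s) Y := by
    intro s hs
    induction s with
    | zero => simpa [hp0] using hyT
    | succ s ih =>
      have hsm : s < m := hs
      have hMst : Ms (T + s) = detMat (F2 s) := by
        simp [hMs]
      have hstep : y (T + (s + 1)) = (detMat (F2 s)).mulVec (y (T + s)) := by
        rw [hy]
        show traj Ms y0 (T + s + 1) = _
        rw [traj, hMst, ← hy]
      rw [hstep, ih (le_of_lt hsm), detMat_mulVec_single]
      have : F2 s (p s) = p (s + 1) := by simp [hF2]
      rw [this]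
  refine ⟨jmax, hjmax.symm, ⟨T + m, y, hy0', ?_, by simpa [hpm] using hP2 m le_rfl⟩, ?_, hXY, ?_⟩
  · -- the moves are stochastic
    intro t ht
    refine ⟨Ms t, ?_, rfl⟩
    by_cases htT : t < T
    · simp only [hMs, htT, if_pos]
      exact detMat_isStoch A f hfA
    · simp only [hMs, htT, if_neg]
      exact detMat_isStoch A (F2 (t - T)) (hF2A (t - T) (by omega))
  · -- requirement equality
    rw [Finset.sum_eq_single jmax]
    · rw [← hjmax]; simp
    · intro b _ hb; simp [Pi.single_apply, hb]
    · simp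
  · -- no defender response
    intro x hx hxsum
    by_contra hcon
    push_neg at hcon
    set S : Finset (Fin N) := univ.filter (fun i => A i jmax = 1) with hS
    have hcard : (S.card : ℝ) = ∑ i, A i jmax := by
      rw [hS]
      rw [Finset.card_filter]
      push_cast
      apply Finset.sum_congr rfl
      intro i _
      rcases hA01 i jmax with h | h <;> simp [h]
    have hxS : ∀ i ∈ S, Y ≤ x i := by
      intro i hi
      have hAi : A i jmax = 1 := (Finset.mem_filter.mp hi).2
      set g : Fin N → Fin N := fun j => if j = jmax then i else n0 j with hg
      have hgA : ∀ j, A (g j) j = 1 := by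
        intro j
        by_cases hj : j = jmax
        · subst hj; simpa [hg] using hAi
        · simpa [hg, hj] using hn0A j
      have := hcon i (detMat g) (detMat_isStoch A g hgA)
      rw [detMat_mulVec_single] at this
      have hgj : g jmax = i := by simp [hg]
      rw [hgj] at this
      simpa using this
    have h1 : S.card • Y ≤ ∑ i ∈ S, x i := Finset.card_nsmul_le_sum S x Y hxS
    have h2 : ∑ i ∈ S, x i ≤ ∑ i, x i :=
      Finset.sum_le_sum_of_subset_of_nonneg (Finset.subset_univ S)
        (fun i _ _ => hx i)
    rw [nsmul_eq_mul, hcard] at h1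
    rw [hxsum] at h2
    rw [hjmax] at hXY
    linarith
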